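/- Let K be a field, n ≥ 1, and let T_{ijk} (1 ≤ i,j ≤ n, k ∈ {1,2}) be independent indeterminates. Set X = (T_{ij1}) and Y = (T_{ij2}), and define f_{k,n-k} ∈ K[T] as the degree-(k,n-k) bihomogeneous component of det(X+Y) (so f_{k,n-k} is the sum over k-subsets S of {1,...,n} of det of the matrix whose columns are taken from X on S and Y off S). Then the n+1 polynomials f_{n,0}, f_{n-1,1}, ..., f_{0,n} are algebraically independent over K. -/

import Mathlib

open MvPolynomial Finset

/-! ### Part 1: algebraic independence of monomial families -/

theorem prod_monomial' {ι σ R : Type*} [CommSemiring R] (t : Finset ι) (w : ι → (σ →₀ ℕ))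
    (a : ι → R) :
    ∏ i ∈ t, (monomial (w i)) (a i) = (monomial (∑ i ∈ t, w i)) (∏ i ∈ t, a i) := by
  induction t using Finset.cons_induction with
  | empty => simp [MvPolynomial.monomial_zero']
  | cons i t hi ih => simp [Finset.prod_cons, Finset.sum_cons, ih, MvPolynomial.monomial_mul]

theorem algIndep_monomial {K σ ι : Type*} [Field K] [DecidableEq σ]
    (c : ι → K) (hc : ∀ i, c i ≠ 0) (v : ι → (σ →₀ ℕ))
    (hv : Function.Injective fun e : ι →₀ ℕ => e.sum fun i m => m • v i) :
    AlgebraicIndependent K fun i => (monomial (v i)) (c i) := by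
  rw [algebraicIndependent_iff]
  intro p hp
  by_contra hp0
  obtain ⟨e₀, he₀⟩ : p.support.Nonempty := MvPolynomial.support_nonempty.mpr hp0
  have key : (aeval fun i => (monomial (v i)) (c i)) p
      = ∑ e ∈ p.support, (monomial (e.sum fun i m => m • v i))
          (coeff e p * e.prod fun i m => c i ^ m) := by
    conv_lhs => rw [p.as_sum]
    rw [map_sum]
    refine Finset.sum_congr rfl fun e _ => ?_
    rw [aeval_monomial]
    have h2 : (e.prod fun i m => ((monomial (v i)) (c i)) ^ m : MvPolynomial σ K)
        = (monomial (e.sum fun i m => m • v i)) (e.prod fun i m => c i ^ m) := by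
      rw [Finsupp.prod, Finsupp.sum, Finsupp.prod]
      simp only [monomial_pow]
      exact prod_monomial' _ _ _
    rw [h2, MvPolynomial.algebraMap_eq, C_mul_monomial]
  rw [key] at hp
  have h3 := congrArg (coeff (e₀.sum fun i m => m • v i)) hp
  rw [MvPolynomial.coeff_sum] at h3
  rw [Finset.sum_eq_single_of_mem e₀ he₀ (fun e _ hne => by
      rw [coeff_monomial, if_neg (fun h => hne (hv h))]),
    coeff_monomial, if_pos rfl, coeff_zero] at h3
  have hprod : (e₀.prod fun i m => c i ^ m) ≠ 0 :=
    Finset.prod_ne_zero_iff.mpr fun i _ => pow_ne_zero _ (hc i)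
  exact (mem_support_iff.mp he₀) ((mul_eq_zero.mp h3).resolve_right hprod)

/-! ### Part 2: the specialization and determinant computations -/

theorem card_filter_le' (n a : ℕ) (h : a < n) :
    (Finset.filter (fun j : Fin n => a ≤ j.val) Finset.univ).card = n - a := by
  have he : Finset.filter (fun j : Fin n => a ≤ j.val) Finset.univ
      = Finset.Ici (⟨a, h⟩ : Fin n) := by
    ext j; simp [Fin.le_def]
  rw [he, Fin.card_Ici]

theorem card_filter_lt' (n a : ℕ) (h : a < n) :
    (Finset.filter (fun j : Fin n => j.val < a) Finset.univ).card = a := by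
  have he : Finset.filter (fun j : Fin n => j.val < a) Finset.univ
      = Finset.Iio (⟨a, h⟩ : Fin n) := by
    ext j; simp [Fin.lt_def]
  rw [he, Fin.card_Iio]

section Aux

variable (K : Type*) [Field K]

/-- The specialization: `X` goes to a companion-type matrix with fresh variables in the
last column, `Y` goes to `y · 1` where `y = X none`. -/
noncomputable def spec (n : ℕ) : Fin n × Fin n × Fin 2 → MvPolynomial (Option (Fin (n + 1))) K :=
  fun p =>
    if p.2.2 = 0 then
      (if p.2.1.val = n - 1 then X (some ⟨n - p.1.val, by omega⟩)
       else if p.1.val = p.2.1.val + 1 then 1 else 0)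
    else if p.1 = p.2.1 then X none else 0

/-- The specialized matrix for a subset `S`. -/
noncomputable def MS (n : ℕ) (S : Finset (Fin n)) :
    Matrix (Fin n) (Fin n) (MvPolynomial (Option (Fin (n + 1))) K) :=
  Matrix.of fun i j => if j ∈ S then spec K n (i, j, 0) else spec K n (i, j, 1)

theorem MS_not_mem (n : ℕ) {S : Finset (Fin n)} {j : Fin n} (h : j ∉ S) (i : Fin n) :
    MS K n S i j = if i = j then X none else 0 := by
  simp only [MS, Matrix.of_apply, if_neg h, spec]
  norm_num

theorem MS_mem_last (n : ℕ) {S : Finset (Fin n)} {j : Fin n} (h : j ∈ S) (hj : j.val = n - 1)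
    (i : Fin n) :
    MS K n S i j = X (some ⟨n - i.val, by omega⟩) := by
  simp only [MS, Matrix.of_apply, if_pos h, spec]
  norm_num [hj]

theorem MS_mem_notlast (n : ℕ) {S : Finset (Fin n)} {j : Fin n} (h : j ∈ S) (hj : j.val ≠ n - 1)
    (i : Fin n) :
    MS K n S i j = if i.val = j.val + 1 then 1 else 0 := by
  simp only [MS, Matrix.of_apply, if_pos h, spec]
  norm_num [hj]

theorem det_MS_empty (n : ℕ) :
    (MS K n ∅).det = (X none : MvPolynomial (Option (Fin (n + 1))) K) ^ n := by
  have he : MS K n ∅ = Matrix.diagonal (fun _ => X none) := by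
    ext i j
    rw [MS_not_mem K n (Finset.notMem_empty j) i, Matrix.diagonal_apply]
  rw [he, Matrix.det_diagonal]
  simp

/-- If the product of entries along `σ` is nonzero, then `σ` fixes everything outside `S`
and shifts non-last elements of `S` up by one. -/
theorem constraints (n : ℕ) (S : Finset (Fin n)) (σ : Equiv.Perm (Fin n))
    (hprod : ∏ i, MS K n S (σ i) i ≠ 0) :
    (∀ j ∉ S, σ j = j) ∧ (∀ j ∈ S, j.val ≠ n - 1 → (σ j).val = j.val + 1) := by
  have hne : ∀ j, MS K n S (σ j) j ≠ 0 := fun j hj =>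
    hprod (Finset.prod_eq_zero (Finset.mem_univ j) hj)
  constructor
  · intro j hj
    have h := hne j
    rw [MS_not_mem K n hj (σ j)] at h
    by_contra hc
    rw [if_neg hc] at h
    exact h rfl
  · intro j hj hjl
    have h := hne j
    rw [MS_mem_notlast K n hj hjl (σ j)] at h
    by_contra hc
    rw [if_neg hc] at h
    exact h rfl

/-- If `S` is closed upwards (under successor) and contains the last index, it's the top
interval of its cardinality. -/
theorem closure_eq (n k : ℕ) (hk : 1 ≤ k) (hn : 0 < n) (S : Finset (Fin n))
    (hcard : S.card = k)
    (hlast : (⟨n - 1, by omega⟩ : Fin n) ∈ S)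
    (hcl : ∀ j ∈ S, ∀ h : j.val + 1 < n, (⟨j.val + 1, h⟩ : Fin n) ∈ S) :
    S = Finset.filter (fun j => n - k ≤ j.val) Finset.univ := by
  have up : ∀ d : ℕ, ∀ j ∈ S, ∀ h : j.val + d < n, (⟨j.val + d, h⟩ : Fin n) ∈ S := by
    intro d
    induction d with
    | zero => intro j hj h; simpa using hj
    | succ d ih =>
      intro j hj h
      have h' : j.val + d < n := by omega
      have h2 := hcl _ (ih j hj h') (by omega)
      simpa [Nat.add_assoc] using h2
  have hSne : S.Nonempty := Finset.card_pos.mp (by omega)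
  set m := S.min' hSne with hm
  have hmem : ∀ j : Fin n, j ∈ S ↔ m.val ≤ j.val := by
    intro j
    constructor
    · intro hj; exact S.min'_le j hj
    · intro hj
      have h2 := up (j.val - m.val) m (S.min'_mem hSne) (by omega)
      have h3 : (⟨m.val + (j.val - m.val), by omega⟩ : Fin n) = j := by
        apply Fin.ext; simp; omega
      rwa [h3] at h2
  have hSeq : S = Finset.filter (fun j => m.val ≤ j.val) Finset.univ := by
    ext j; simpa using hmem j
  have hcard2 : n - m.val = k := by
    rw [← hcard, hSeq, card_filter_le' n m.val m.isLt]
  have hmval : m.val = n - k := by omega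
  rw [hSeq, hmval]

theorem det_MS_zero (n k : ℕ) (S : Finset (Fin n)) (hcard : S.card = k) (hk : 1 ≤ k)
    (hS : S ≠ Finset.filter (fun j => n - k ≤ j.val) Finset.univ) :
    (MS K n S).det = 0 := by
  have hSne : S.Nonempty := Finset.card_pos.mp (by omega)
  have hn : 0 < n := (hSne.choose).pos
  rw [Matrix.det_apply]
  refine Finset.sum_eq_zero fun σ _ => ?_
  suffices h : ∏ i, MS K n S (σ i) i = 0 by rw [h, smul_zero]
  by_contra hprod
  obtain ⟨h1, h2⟩ := constraints K n S σ hprod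
  by_cases hlast : (⟨n - 1, by omega⟩ : Fin n) ∈ S
  · by_cases hcl : ∀ j ∈ S, ∀ h : j.val + 1 < n, (⟨j.val + 1, h⟩ : Fin n) ∈ S
    · exact hS (closure_eq n k hk hn S hcard hlast hcl)
    · push_neg at hcl
      obtain ⟨j, hjS, hlt, hnotin⟩ := hcl
      have hσj := h2 j hjS (by omega)
      have hfix := h1 _ hnotin
      have heq : σ j = σ (⟨j.val + 1, hlt⟩ : Fin n) := by
        apply Fin.ext
        rw [hfix, hσj]
      have := σ.injective heq
      have := congrArg Fin.val this
      simp at this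
  · set jm := S.max' hSne with hjm
    have hjmS : jm ∈ S := S.max'_mem hSne
    have hjmv : jm.val ≠ n - 1 := by
      intro hc
      apply hlast
      have : jm = (⟨n - 1, by omega⟩ : Fin n) := Fin.ext (by simpa using hc)
      rwa [← this]
    have hjmlt : jm.val + 1 < n := by have := jm.isLt; omega
    have hσjm := h2 jm hjmS hjmv
    have hj'notin : (⟨jm.val + 1, hjmlt⟩ : Fin n) ∉ S := by
      intro hc
      have := S.le_max' _ hc
      rw [Fin.le_def] at this
      simp at this
      exact lt_irrefl _ this
    have hfix := h1 _ hj'notin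
    have heq : σ jm = σ (⟨jm.val + 1, hjmlt⟩ : Fin n) := by
      apply Fin.ext
      rw [hfix, hσjm]
    have := σ.injective heq
    have := congrArg Fin.val this
    simp at this

/-- The contributing permutation: the cycle `(n-1, n-2, ..., n-k)` written as
`j ↦ j` for `j < n-k`, `j ↦ j+1` for `n-k ≤ j < n-1`, `n-1 ↦ n-k`. -/
noncomputable def cyc (n k : ℕ) (hk : 1 ≤ k) (hkn : k ≤ n) : Equiv.Perm (Fin n) :=
  Equiv.ofBijective
    (fun j => if h1 : j.val < n - k then j
      else if h2 : j.val = n - 1 then ⟨n - k, by omega⟩ else ⟨j.val + 1, by omega⟩)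
    (by
      rw [← Finite.injective_iff_bijective]
      intro a b hab
      dsimp only at hab
      apply Fin.ext
      have ha := a.isLt
      have hb := b.isLt
      rw [Fin.ext_iff] at hab
      split_ifs at hab <;> (try simp only [Fin.val_mk] at hab) <;> omega)

theorem cyc_apply (n k : ℕ) (hk : 1 ≤ k) (hkn : k ≤ n) (j : Fin n) :
    (cyc n k hk hkn j : Fin n) = if h1 : j.val < n - k then j
      else if h2 : j.val = n - 1 then ⟨n - k, by omega⟩ else ⟨j.val + 1, by omega⟩ := rfl

theorem det_MS_good (n k : ℕ) (hk : 1 ≤ k) (hkn : k ≤ n) :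
    (MS K n (Finset.filter (fun j => n - k ≤ j.val) Finset.univ)).det
      = (monomial (Finsupp.single (some (⟨k, by omega⟩ : Fin (n + 1))) 1
            + Finsupp.single (none : Option (Fin (n + 1))) (n - k)))
          (((Equiv.Perm.sign (cyc n k hk hkn) : ℤ) : K)) := by
  have hn : 0 < n := by omega
  set S := Finset.filter (fun j : Fin n => n - k ≤ j.val) Finset.univ with hSdef
  have hmemS : ∀ j : Fin n, j ∈ S ↔ n - k ≤ j.val := by intro j; simp [hSdef]
  set σ₀ := cyc n k hk hkn with hσ₀
  rw [Matrix.det_apply]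
  rw [Finset.sum_eq_single_of_mem σ₀ (Finset.mem_univ _) ?other]
  case other =>
    intro σ _ hσne
    suffices h : ∏ i, MS K n S (σ i) i = 0 by rw [h, smul_zero]
    by_contra hprod
    obtain ⟨h1, h2⟩ := constraints K n S σ hprod
    apply hσne
    -- first: σ (n-1) = n-k
    have hlastS : (⟨n - 1, by omega⟩ : Fin n) ∈ S := by rw [hmemS]; simp; omega
    have hlval : (σ (⟨n - 1, by omega⟩ : Fin n)).val = n - k := by
      set t := σ (⟨n - 1, by omega⟩ : Fin n) with ht
      rcases lt_trichotomy t.val (n - k) with hlt | heq | hgt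
      · exfalso
        have htS : t ∉ S := by rw [hmemS]; omega
        have := σ.injective (show σ t = σ (⟨n - 1, by omega⟩ : Fin n) from by rw [h1 t htS])
        have := congrArg Fin.val this
        simp at this
        omega
      · exact heq
      · exfalso
        have hu : t.val - 1 < n := by have := t.isLt; omega
        have huS : (⟨t.val - 1, hu⟩ : Fin n) ∈ S := by rw [hmemS]; simp; omega
        have huv : ((⟨t.val - 1, hu⟩ : Fin n)).val ≠ n - 1 := by
          have := t.isLt; simp; omega
        have := h2 _ huS huv
        have heq2 : σ (⟨t.val - 1, hu⟩ : Fin n) = σ (⟨n - 1, by omega⟩ : Fin n) := by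
          apply Fin.ext
          rw [this, ← ht]
          simp
          omega
        have := σ.injective heq2
        have := congrArg Fin.val this
        simp at this
        have := t.isLt
        omega
    -- now σ = σ₀
    apply Equiv.ext
    intro j
    rw [hσ₀, cyc_apply]
    by_cases hj1 : j.val < n - k
    · rw [dif_pos hj1]
      exact h1 j (by rw [hmemS]; omega)
    · rw [dif_neg hj1]
      by_cases hj2 : j.val = n - 1
      · rw [dif_pos hj2]
        have hje : j = (⟨n - 1, by omega⟩ : Fin n) := Fin.ext (by simpa using hj2)
        apply Fin.ext
        conv_lhs => rw [hje]
        simpa using hlval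
      · rw [dif_neg hj2]
        exact Fin.ext (by simpa using h2 j (by rw [hmemS]; omega) hj2)
  -- value at σ₀
  have hval : ∏ i, MS K n S (σ₀ i) i
      = X (some (⟨k, by omega⟩ : Fin (n + 1))) * (X none) ^ (n - k) := by
    rw [← Finset.prod_filter_mul_prod_filter_not Finset.univ (fun j : Fin n => n - k ≤ j.val)]
    have hfirst : ∏ j ∈ Finset.filter (fun j : Fin n => n - k ≤ j.val) Finset.univ,
        MS K n S (σ₀ j) j = X (some (⟨k, by omega⟩ : Fin (n + 1))) := by
      rw [Finset.prod_eq_single_of_mem (⟨n - 1, by omega⟩ : Fin n)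
        (by simp; omega) ?others]
      case others =>
        intro j hjmem hjne
        have hjS : j ∈ S := by rw [hmemS]; simp at hjmem; omega
        have hjv : j.val ≠ n - 1 := fun hc => hjne (Fin.ext (by simpa using hc))
        rw [MS_mem_notlast K n hjS hjv]
        rw [if_pos]
        rw [hσ₀, cyc_apply, dif_neg (by simp at hjmem; omega), dif_neg hjv]
      · have hlS : (⟨n - 1, by omega⟩ : Fin n) ∈ S := by rw [hmemS]; simp; omega
        rw [MS_mem_last K n hlS (by simp)]
        congr 2
        rw [hσ₀, cyc_apply, dif_neg (by simp; omega), dif_pos (by simp)]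
        apply Fin.ext
        simp
        omega
    have hsecond : ∏ j ∈ Finset.filter (fun j : Fin n => ¬ n - k ≤ j.val) Finset.univ,
        MS K n S (σ₀ j) j = (X none : MvPolynomial (Option (Fin (n + 1))) K) ^ (n - k) := by
      rw [Finset.prod_congr rfl (g := fun _ => (X none : MvPolynomial (Option (Fin (n + 1))) K))
        (fun j hj => ?_)]
      · rw [Finset.prod_const]
        congr 1
        have : Finset.filter (fun j : Fin n => ¬ n - k ≤ j.val) Finset.univ
            = Finset.filter (fun j : Fin n => j.val < n - k) Finset.univ := by
          apply Finset.filter_congr; intro x _; simp; omega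
        rw [this, card_filter_lt' n (n - k) (by omega)]
      · simp only [Finset.mem_filter] at hj
        have hjS : j ∉ S := by rw [hmemS]; exact hj.2
        rw [MS_not_mem K n hjS, if_pos]
        rw [hσ₀, cyc_apply, dif_pos (by omega)]
    rw [hfirst, hsecond]
  rw [hval]
  -- convert sign-smul to monomial
  rw [Units.smul_def, zsmul_eq_mul]
  rw [show ((((Equiv.Perm.sign σ₀ : ℤ)) : MvPolynomial (Option (Fin (n + 1))) K))
      = C (((Equiv.Perm.sign σ₀ : ℤ) : K)) from
    (map_intCast (C : K →+* MvPolynomial (Option (Fin (n + 1))) K) _).symm]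
  rw [show (X (some (⟨k, by omega⟩ : Fin (n + 1))) : MvPolynomial (Option (Fin (n + 1))) K)
      = monomial (Finsupp.single (some (⟨k, by omega⟩ : Fin (n + 1))) 1) 1 from rfl]
  rw [X_pow_eq_monomial, monomial_mul, C_mul_monomial]
  norm_num

end Aux

/-! ### Part 3: assembly -/

theorem f_algebraicallyIndependent (K : Type*) [Field K] (n : ℕ) (hn : 1 ≤ n) :
    AlgebraicIndependent K
      (fun k : Fin (n + 1) =>
        ∑ S ∈ Finset.powersetCard (k : ℕ) (Finset.univ : Finset (Fin n)),
          (Matrix.of fun i j =>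
              if j ∈ S then
                (MvPolynomial.X (i, j, (0 : Fin 2)) :
                  MvPolynomial (Fin n × Fin n × Fin 2) K)
              else MvPolynomial.X (i, j, (1 : Fin 2))).det) := by
  set v : Fin (n + 1) → (Option (Fin (n + 1)) →₀ ℕ) := fun k =>
    if (k : ℕ) = 0 then Finsupp.single none n
    else Finsupp.single (some k) 1 + Finsupp.single none (n - (k : ℕ)) with hv
  set c : Fin (n + 1) → K := fun k =>
    if h : (k : ℕ) = 0 then 1
    else ((Equiv.Perm.sign (cyc n (k : ℕ) (Nat.one_le_iff_ne_zero.mpr h)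
        (Nat.lt_succ_iff.mp k.isLt)) : ℤ) : K) with hc
  have hcne : ∀ k, c k ≠ 0 := by
    intro k
    simp only [hc]
    by_cases h : (k : ℕ) = 0
    · rw [dif_pos h]; exact one_ne_zero
    · rw [dif_neg h]
      rcases Int.units_eq_one_or (Equiv.Perm.sign (cyc n (k : ℕ)
        (Nat.one_le_iff_ne_zero.mpr h) (Nat.lt_succ_iff.mp k.isLt))) with hs | hs <;>
        rw [hs] <;> norm_num
  have hsome : ∀ (f : Fin (n + 1) →₀ ℕ) (j : Fin (n + 1)), j ≠ 0 →
      (f.sum fun i m => m • v i) (some j) = f j := by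
    intro f j hj
    have hj' : (j : ℕ) ≠ 0 := fun hc' => hj (Fin.ext (by simpa using hc'))
    rw [Finsupp.sum_apply]
    have hterm : ∀ i ∈ f.support, (f i • v i) (some j) = if i = j then f i else 0 := by
      intro i _
      rw [Finsupp.smul_apply, smul_eq_mul]
      by_cases hij : i = j
      · subst hij
        simp [hv, hj', hj, Finsupp.single_apply]
      · rw [if_neg hij]
        by_cases hi0 : (i : ℕ) = 0
        · simp [hv, Fin.val_eq_zero_iff.mp hi0, Finsupp.single_apply]
        · simp [hv, mt Fin.val_eq_zero_iff.mpr hi0, Finsupp.single_apply, hij]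
    rw [Finsupp.sum_congr (g2 := fun i m => if i = j then m else 0) hterm]
    rw [Finsupp.sum]
    rw [Finset.sum_ite_eq' f.support j (fun i => f i)]
    by_cases hmem : j ∈ f.support
    · rw [if_pos hmem]
    · rw [if_neg hmem, Finsupp.notMem_support_iff.mp hmem]
  have hinj : Function.Injective fun e : Fin (n + 1) →₀ ℕ => e.sum fun i m => m • v i := by
    intro e e' h
    simp only at h
    have hoff : ∀ j : Fin (n + 1), j ≠ 0 → e j = e' j := by
      intro j hj
      rw [← hsome e j hj, ← hsome e' j hj, h]
    have herase : e.erase 0 = e'.erase 0 := by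
      ext x
      by_cases hx : x = 0
      · subst hx; simp [Finsupp.erase_same]
      · rw [Finsupp.erase_ne hx, Finsupp.erase_ne hx]
        exact hoff x hx
    have hLadd : ∀ f g : Fin (n + 1) →₀ ℕ, ((f + g).sum fun i m => m • v i)
        = (f.sum fun i m => m • v i) + (g.sum fun i m => m • v i) :=
      fun f g => Finsupp.sum_add_index' (fun i => zero_smul _ _) (fun i m m' => add_smul _ _ _)
    have hdecomp : ∀ f : Fin (n + 1) →₀ ℕ, (f.sum fun i m => m • v i)
        = f 0 • v 0 + ((f.erase 0).sum fun i m => m • v i) := by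
      intro f
      conv_lhs => rw [← Finsupp.single_add_erase 0 f]
      rw [hLadd]
      congr 1
      exact Finsupp.sum_single_index (zero_smul _ _)
    rw [hdecomp e, hdecomp e', herase] at h
    have h0 : e 0 • v 0 = e' 0 • v 0 := add_right_cancel h
    have h0' := congrArg (fun g => g (none : Option (Fin (n + 1)))) h0
    simp only [Finsupp.smul_apply, smul_eq_mul] at h0'
    have hv0 : v 0 none = n := by simp [hv]
    rw [hv0] at h0'
    have he0 : e 0 = e' 0 := Nat.eq_of_mul_eq_mul_right (by omega) h0'
    ext x
    by_cases hx : x = 0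
    · subst hx; exact he0
    · exact hoff x hx
  refine AlgebraicIndependent.of_comp
    (aeval (spec K n) : MvPolynomial (Fin n × Fin n × Fin 2) K →ₐ[K]
      MvPolynomial (Option (Fin (n + 1))) K) ?_
  have heq : ((aeval (spec K n) : MvPolynomial (Fin n × Fin n × Fin 2) K →ₐ[K]
        MvPolynomial (Option (Fin (n + 1))) K) ∘ fun k : Fin (n + 1) =>
        ∑ S ∈ Finset.powersetCard (k : ℕ) (Finset.univ : Finset (Fin n)),
          (Matrix.of fun i j =>
              if j ∈ S then
                (MvPolynomial.X (i, j, (0 : Fin 2)) :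
                  MvPolynomial (Fin n × Fin n × Fin 2) K)
              else MvPolynomial.X (i, j, (1 : Fin 2))).det)
      = fun k => (monomial (v k)) (c k) := by
    funext k
    simp only [Function.comp_apply, map_sum]
    have hdet : ∀ S ∈ Finset.powersetCard (k : ℕ) (Finset.univ : Finset (Fin n)),
        (aeval (spec K n))
          (Matrix.of fun i j =>
              if j ∈ S then
                (MvPolynomial.X (i, j, (0 : Fin 2)) :
                  MvPolynomial (Fin n × Fin n × Fin 2) K)
              else MvPolynomial.X (i, j, (1 : Fin 2))).det
          = (MS K n S).det := by
      intro S _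
      rw [AlgHom.map_det]
      congr 1
      ext i j
      by_cases h : j ∈ S <;> simp [Matrix.map_apply, MS, h]
    rw [Finset.sum_congr rfl hdet]
    by_cases hk0 : (k : ℕ) = 0
    · rw [hk0, Finset.powersetCard_zero, Finset.sum_singleton, det_MS_empty]
      simp only [hv, hc, hk0, if_pos, dif_pos]
      rw [X_pow_eq_monomial]
    · have hk1 : 1 ≤ (k : ℕ) := Nat.one_le_iff_ne_zero.mpr hk0
      have hkn : (k : ℕ) ≤ n := Nat.lt_succ_iff.mp k.isLt
      rw [Finset.sum_eq_single_of_mem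
        (Finset.filter (fun j : Fin n => n - (k : ℕ) ≤ j.val) Finset.univ)
        (by
          rw [Finset.mem_powersetCard]
          exact ⟨Finset.subset_univ _, by rw [card_filter_le' n _ (by omega)]; omega⟩)
        (fun S hS hne =>
          det_MS_zero K n (k : ℕ) S (Finset.mem_powersetCard.mp hS).2 hk1 hne)]
      rw [det_MS_good K n (k : ℕ) hk1 hkn]
      simp only [hv, hc, hk0, if_neg, dif_neg]
      rfl
  rw [heq]
  exact algIndep_monomial c hcne v hinj
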